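/- Let A and C be bounded self-adjoint operators on a Hilbert space with 0 ≤ A, 0 ≤ C, and A² ≤ C². Then A ≤ C. -/

import Mathlib

open scoped NNReal ENNReal

section Aux

lemma aux_biSup_nnnorm_diff_zero (S : Set ℂ) :
    ⨆ k ∈ S, (‖k‖₊ : ℝ≥0∞) = ⨆ k ∈ S \ {0}, (‖k‖₊ : ℝ≥0∞) := by
  apply le_antisymm
  · refine iSup₂_le fun k hk => ?_
    rcases eq_or_ne k 0 with rfl | hne
    · simp
    · exact le_iSup₂ (f := fun k (_ : k ∈ S \ {0}) => (‖k‖₊ : ℝ≥0∞)) k ⟨hk, hne⟩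
  · exact iSup₂_le fun k hk => le_iSup₂ (f := fun k (_ : k ∈ S) => (‖k‖₊ : ℝ≥0∞)) k hk.1

variable {A : Type*} [CStarAlgebra A]

lemma aux_spectralRadius_mul_comm (a b : A) :
    spectralRadius ℂ (a * b) = spectralRadius ℂ (b * a) := by
  unfold spectralRadius
  rw [aux_biSup_nnnorm_diff_zero (spectrum ℂ (a * b)),
    aux_biSup_nnnorm_diff_zero (spectrum ℂ (b * a)),
    spectrum.nonzero_mul_comm]

variable [PartialOrder A] [StarOrderedRing A]

lemma aux_algebraMap_nnreal_nonneg (x : ℝ≥0) : 0 ≤ algebraMap ℝ≥0 A x := by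
  have : algebraMap ℝ≥0 A x
      = star (algebraMap ℝ≥0 A (NNReal.sqrt x)) * algebraMap ℝ≥0 A (NNReal.sqrt x) := by
    rw [← algebraMap_star_comm, star_trivial, ← map_mul, NNReal.mul_self_sqrt]
  rw [this]
  exact star_mul_self_nonneg _

lemma aux_sqrt_le_sqrt {a b : A} (ha : 0 ≤ a) (hb : 0 ≤ b) (hbu : IsUnit b)
    (hab : a ≤ b) : CFC.sqrt a ≤ CFC.sqrt b := by
  rcases subsingleton_or_nontrivial A with hs | hnt
  · exact le_of_eq (Subsingleton.elim _ _)
  have hsb_sq : CFC.sqrt b * CFC.sqrt b = b := CFC.sqrt_mul_sqrt_self b hb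
  have hsbu : IsUnit (CFC.sqrt b) := by
    rw [← hsb_sq] at hbu
    exact ((Commute.refl _).isUnit_mul_iff.mp hbu).1
  rw [le_iff_norm_sqrt_mul_rpow _ _ (CFC.sqrt_nonneg _) (hsbu.isStrictlyPositive (CFC.sqrt_nonneg _))]
  set x := CFC.sqrt (CFC.sqrt a) with hxdef
  set y := CFC.sqrt b ^ (-(1 / 2) : ℝ) with hydef
  have hx : IsSelfAdjoint x := IsSelfAdjoint.of_nonneg (CFC.sqrt_nonneg _)
  have hy : IsSelfAdjoint y := IsSelfAdjoint.of_nonneg CFC.rpow_nonneg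
  have hb0 : (0 : ℝ≥0) ∉ spectrum ℝ≥0 b := spectrum.zero_notMem_iff ℝ≥0 |>.mpr hbu
  have hsb0 : (0 : ℝ≥0) ∉ spectrum ℝ≥0 (CFC.sqrt b) :=
    spectrum.zero_notMem_iff ℝ≥0 |>.mpr hsbu
  have hxx : x * x = CFC.sqrt a := CFC.sqrt_mul_sqrt_self _ (CFC.sqrt_nonneg _)
  have hyy : y * y = b ^ (-(1 / 2) : ℝ) := by
    rw [hydef, ← CFC.rpow_add hsbu]
    norm_num
    rw [CFC.sqrt_eq_rpow, CFC.rpow_rpow b _ _ (by norm_num) (hbu.isStrictlyPositive hb)]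
    norm_num
  have h1 : ‖CFC.sqrt a * b ^ (-(1 / 2) : ℝ)‖ ≤ 1 :=
    (le_iff_norm_sqrt_mul_rpow _ _ ha (hbu.isStrictlyPositive hb)).mp hab
  have hstar : star (x * y) * (x * y) = y * (CFC.sqrt a * y) := by
    rw [star_mul, hx.star_eq, hy.star_eq, mul_assoc, ← mul_assoc x x y, hxx]
  have hpos : 0 ≤ y * (CFC.sqrt a * y) := by
    rw [← hstar]; exact star_mul_self_nonneg _
  haveI : IsStarNormal (y * (CFC.sqrt a * y)) :=
    (IsSelfAdjoint.of_nonneg hpos).isStarNormal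
  have hrad : (‖y * (CFC.sqrt a * y)‖₊ : ℝ≥0∞) ≤ 1 := by
    rw [← IsStarNormal.spectralRadius_eq_nnnorm (y * (CFC.sqrt a * y)),
      aux_spectralRadius_mul_comm, mul_assoc, hyy]
    calc spectralRadius ℂ (CFC.sqrt a * b ^ (-(1 / 2) : ℝ))
        ≤ (‖CFC.sqrt a * b ^ (-(1 / 2) : ℝ)‖₊ : ℝ≥0∞) := spectrum.spectralRadius_le_nnnorm (𝕜 := ℂ) _
      _ ≤ 1 := by
          rw [ENNReal.coe_le_one_iff, ← NNReal.coe_le_coe, coe_nnnorm]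
          exact h1
  rw [← sq_le_one_iff₀ (norm_nonneg _), sq, ← CStarRing.norm_star_mul_self, hstar]
  rw [ENNReal.coe_le_one_iff, ← NNReal.coe_le_coe, coe_nnnorm] at hrad
  exact hrad

lemma aux_le_of_sq_le_sq {a c : A} (ha : 0 ≤ a) (hc : 0 ≤ c) (h : a ^ 2 ≤ c ^ 2) :
    a ≤ c := by
  have key : ∀ ε : ℝ≥0, 0 < ε → a ≤ c + algebraMap ℝ≥0 A ε := by
    intro ε hε
    set r := algebraMap ℝ≥0 A ε with hr
    have hrnn : 0 ≤ r := aux_algebraMap_nnreal_nonneg ε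
    have hrsa : IsSelfAdjoint r := IsSelfAdjoint.of_nonneg hrnn
    have hru : IsUnit r := IsUnit.map (algebraMap ℝ≥0 A) hε.ne'.isUnit
    have hcε : 0 ≤ c + r := add_nonneg hc hrnn
    have hu : IsUnit (c + r) := by
      refine CStarAlgebra.isUnit_of_le r ?_ (hru.isStrictlyPositive hrnn)
      exact le_add_of_nonneg_left hc
    -- cross terms are nonneg
    have hsr : algebraMap ℝ≥0 A (NNReal.sqrt ε) * algebraMap ℝ≥0 A (NNReal.sqrt ε) = r := by
      rw [← map_mul, NNReal.mul_self_sqrt]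
    have hcr : 0 ≤ c * r := by
      have : c * r = algebraMap ℝ≥0 A (NNReal.sqrt ε) * c
          * algebraMap ℝ≥0 A (NNReal.sqrt ε) := by
        rw [← hsr, Algebra.commutes (NNReal.sqrt ε) c, mul_assoc]
      rw [this]
      exact conjugate_nonneg_of_nonneg hc (aux_algebraMap_nnreal_nonneg _)
    have hrc : 0 ≤ r * c := by
      rw [hr, Algebra.commutes ε c]
      exact hcr
    have hrr : 0 ≤ r * r := by nth_rewrite 1 [← hrsa.star_eq]; exact star_mul_self_nonneg r
    have hsq : a ^ 2 ≤ (c + r) ^ 2 := by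
      calc a ^ 2 ≤ c ^ 2 := h
        _ ≤ (c + r) ^ 2 := by
            have : (c + r) ^ 2 = c ^ 2 + (c * r + (r * c + r * r)) := by
              simp only [sq, add_mul, mul_add]; abel
            rw [this]
            exact le_add_of_nonneg_right (add_nonneg hcr (add_nonneg hrc hrr))
    have := aux_sqrt_le_sqrt (CStarAlgebra.pow_nonneg ha 2) (CStarAlgebra.pow_nonneg hcε 2) (hu.pow 2) hsq
    rwa [CFC.sqrt_sq a ha, CFC.sqrt_sq (c + r) hcε] at this
  -- take the limit ε → 0
  rw [← sub_nonneg]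
  have hcl : IsClosed {x : A | 0 ≤ x} := CStarAlgebra.isClosed_nonneg
  have htend : Filter.Tendsto (fun ε : ℝ≥0 => c - a + algebraMap ℝ≥0 A ε)
      (nhdsWithin 0 (Set.Ioi 0)) (nhds (c - a)) := by
    have hcont : Continuous fun ε : ℝ≥0 => c - a + algebraMap ℝ≥0 A ε := by
      simp only [Algebra.algebraMap_eq_smul_one]
      fun_prop
    have h0 := (hcont.tendsto 0).mono_left (nhdsWithin_le_nhds (s := Set.Ioi 0))
    simpa only [map_zero, add_zero] using h0
  refine hcl.mem_of_tendsto htend ?_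
  filter_upwards [self_mem_nhdsWithin] with ε hε
  have h2 := key ε hε
  rw [← sub_nonneg] at h2
  show 0 ≤ c - a + algebraMap ℝ≥0 A ε
  convert h2 using 1
  abel

end Aux

/-- Löwner–Heinz for exponent `1/2` on bounded operators: if `A, C` are positive
bounded self-adjoint operators on a Hilbert space with `A² ≤ C²`, then `A ≤ C`. -/
theorem stmt_3 {H : Type*} [NormedAddCommGroup H] [InnerProductSpace ℂ H]
    [CompleteSpace H] (A C : H →L[ℂ] H)
    (hA : A.IsPositive) (hC : C.IsPositive)
    (h : ContinuousLinearMap.IsPositive (C ^ 2 - A ^ 2)) :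
    ContinuousLinearMap.IsPositive (C - A) := by
  rw [← ContinuousLinearMap.le_def]
  exact aux_le_of_sq_le_sq ((ContinuousLinearMap.nonneg_iff_isPositive A).mpr hA)
    ((ContinuousLinearMap.nonneg_iff_isPositive C).mpr hC)
    ((ContinuousLinearMap.le_def _ _).mpr h)
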